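/- In the superstar setting, a firm using first-free with window k picks the top-ranked candidate with probability p₂ + (1−p₂)^k + (p₂−p₁)·((1−p₂)^{k−1} P_k − P₁), where P₁ = P[σ^1] and P_k = Σ_{i=1}^k P[σ^i]. Moreover, this probability is strictly larger for window size k−1 than for window size k (holding the ranking distribution fixed), i.e., shrinking the window increases the chance the top-ranked candidate is selected. -/
import Mathlib


/-- In the superstar setting, a firm using first-free with
window `k` picks the top-ranked candidate iff the rank-1 candidate is free or
all top `k` candidates are busy; this probability equals
`p₂ + (1−p₂)^k + (p₂−p₁)·((1−p₂)^{k−1}·P_k − P₁)`, where `P₁ = P[σ^1]` and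
`P_k` is the probability the high-value candidate is in the top `k`.
Moreover, this probability is strictly larger for window size `k−1` (with its
value `P_{k−1}`) than for window size `k`: shrinking the window increases the
chance the top-ranked candidate is selected. -/
theorem stmt13
    (p₁ p₂ P1 Pk Pk' : ℝ) (k : ℕ)
    (hp₁ : 0 < p₁) (hp₁₂ : p₁ < p₂) (hp₂ : p₂ < 1) (hk : 2 ≤ k)
    (hP1 : 0 ≤ P1) (hP1k' : P1 ≤ Pk') (hPk' : Pk' ≤ Pk) (hPk : Pk ≤ 1) :
    (p₁ * P1 + p₂ * (1 - P1) +
        ((1 - p₁) * (1 - p₂) ^ (k - 1) * Pk + (1 - p₂) ^ k * (1 - Pk)) =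
      p₂ + (1 - p₂) ^ k + (p₂ - p₁) * ((1 - p₂) ^ (k - 1) * Pk - P1)) ∧
    (p₂ + (1 - p₂) ^ k + (p₂ - p₁) * ((1 - p₂) ^ (k - 1) * Pk - P1) <
      p₂ + (1 - p₂) ^ (k - 1) + (p₂ - p₁) * ((1 - p₂) ^ (k - 2) * Pk' - P1)) := by
  obtain ⟨m, rfl⟩ : ∃ m, k = m + 2 := ⟨k - 2, by omega⟩
  have h1 : m + 2 - 1 = m + 1 := by omega
  have h2 : m + 2 - 2 = m := by omega
  rw [h1, h2]
  set q : ℝ := 1 - p₂ with hq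
  have hq0 : 0 < q := by simp [hq]; linarith
  have hqm : 0 < q ^ m := pow_pos hq0 m
  constructor
  · ring
  · have key : 0 < p₂ * q + (p₂ - p₁) * (Pk' - q * Pk) := by
      nlinarith [mul_nonneg (le_of_lt (by linarith : (0:ℝ) < p₂ - p₁))
        (by nlinarith : (0:ℝ) ≤ q * (1 - Pk) + Pk')]
    have hmain := mul_pos hqm key
    have e1 : q ^ (m+1) = q ^ m * q := pow_succ q m
    have e2 : q ^ (m+2) = q ^ m * q * q := by rw [pow_succ, pow_succ]
    have hqe : q - q*q = p₂*q := by rw [hq]; ring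
    rw [e2, e1]
    nlinarith [hmain, mul_pos hqm hq0, hqe]
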